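/- If a superoperator Φ with fixed point γ satisfies GNS detailed balance (Φ = R_γ ∘ Φ† ∘ R_γ^{-1} with R_γ[X] = Xγ), then it also satisfies KMS detailed balance (Φ = J_γ ∘ Φ† ∘ J_γ^{-1} with J_γ[X] = √γ X √γ), assuming Φ is Hermitian-preserving and γ is a positive definite Gibbs state. -/

import Mathlib

open Matrix
open scoped ComplexOrder

lemma hs_nondeg {d : ℕ} (M : Matrix (Fin d) (Fin d) ℂ)
    (h : ∀ B : Matrix (Fin d) (Fin d) ℂ, (Mᴴ * B).trace = 0) : M = 0 := by
  have ht := h M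
  have ht' : ∑ i, ∑ j, (Complex.normSq (M j i) : ℂ) = 0 := by
    simpa [Matrix.trace, Matrix.mul_apply, Matrix.conjTranspose_apply, Matrix.diag,
      Complex.normSq_eq_conj_mul_self] using ht
  have hreal : ∑ i, ∑ j, Complex.normSq (M j i) = 0 := by exact_mod_cast ht'
  have hz := (Finset.sum_eq_zero_iff_of_nonneg (fun i _ =>
    Finset.sum_nonneg fun j _ => Complex.normSq_nonneg _)).mp hreal
  ext i j
  have := (Finset.sum_eq_zero_iff_of_nonneg (fun k _ => Complex.normSq_nonneg _)).mp
    (hz j (Finset.mem_univ j)) i (Finset.mem_univ i)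
  simpa using Complex.normSq_eq_zero.mp this

lemma diag_mul_std_mul_diag {d : ℕ} (v w : Fin d → ℂ) (i j : Fin d) (c : ℂ) :
    diagonal v * single i j c * diagonal w = single i j (v i * c * w j) := by
  ext k l
  rw [Matrix.mul_apply]
  simp only [Matrix.mul_diagonal, Matrix.diagonal_mul]
  by_cases h1 : i = k <;> by_cases h2 : j = l <;>
    simp [Matrix.single, h1, h2, Finset.sum_ite_eq, Matrix.of_apply]

lemma half_step {d : ℕ} (e : Fin d → ℝ) (hpos : ∀ i, 0 < e i)
    (Ψ : Matrix (Fin d) (Fin d) ℂ →ₗ[ℂ] Matrix (Fin d) (Fin d) ℂ)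
    (h : ∀ X, Ψ (diagonal (fun i => (e i : ℂ) * (e i : ℂ)) * X *
          diagonal (fun i => ((e i : ℂ))⁻¹ * ((e i : ℂ))⁻¹))
        = diagonal (fun i => (e i : ℂ) * (e i : ℂ)) * Ψ X *
          diagonal (fun i => ((e i : ℂ))⁻¹ * ((e i : ℂ))⁻¹)) :
    ∀ X, Ψ (diagonal (fun i => (e i : ℂ)) * X * diagonal (fun i => ((e i : ℂ))⁻¹))
        = diagonal (fun i => (e i : ℂ)) * Ψ X * diagonal (fun i => ((e i : ℂ))⁻¹) := by
  have hne : ∀ i, (e i : ℂ) ≠ 0 := fun i => by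
    exact_mod_cast (hpos i).ne'
  let L1 : Matrix (Fin d) (Fin d) ℂ →ₗ[ℂ] Matrix (Fin d) (Fin d) ℂ :=
    { toFun := fun X => Ψ (diagonal (fun i => (e i : ℂ)) * X * diagonal (fun i => ((e i : ℂ))⁻¹))
      map_add' := by intro x y; simp [Matrix.mul_add, Matrix.add_mul]
      map_smul' := by intro c x; simp [Matrix.mul_smul, Matrix.smul_mul] }
  let L2 : Matrix (Fin d) (Fin d) ℂ →ₗ[ℂ] Matrix (Fin d) (Fin d) ℂ :=
    { toFun := fun X => diagonal (fun i => (e i : ℂ)) * Ψ X * diagonal (fun i => ((e i : ℂ))⁻¹)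
      map_add' := by intro x y; simp [Matrix.mul_add, Matrix.add_mul]
      map_smul' := by intro c x; simp [Matrix.mul_smul, Matrix.smul_mul] }
  suffices hL : L1 = L2 by
    intro X; exact DFunLike.congr_fun hL X
  apply Module.Basis.ext (Matrix.stdBasis ℂ (Fin d) (Fin d))
  rintro ⟨i, j⟩
  rw [Matrix.stdBasis_eq_single]
  show Ψ (diagonal (fun i => (e i : ℂ)) * single i j 1 * diagonal (fun i => ((e i : ℂ))⁻¹))
      = diagonal (fun i => (e i : ℂ)) * Ψ (single i j 1) * diagonal (fun i => ((e i : ℂ))⁻¹)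
  have hsmul : ∀ c : ℂ, single i j c = c • single i j 1 := fun c => by
    rw [smul_single, smul_eq_mul, mul_one]
  have hh := h (single i j 1)
  rw [diag_mul_std_mul_diag, hsmul, _root_.map_smul] at hh
  rw [diag_mul_std_mul_diag, hsmul, _root_.map_smul]
  set M := Ψ (single i j 1) with hMdef
  ext k l
  have hkl := congrFun (congrFun hh k) l
  simp only [Matrix.smul_apply, smul_eq_mul, Matrix.mul_diagonal, Matrix.diagonal_mul] at hkl ⊢
  by_cases hM0 : M k l = 0
  · simp [hM0]
  · have h3 : ((e i : ℂ) * (e i : ℂ)) * (((e j : ℂ))⁻¹ * ((e j : ℂ))⁻¹)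
        = ((e k : ℂ) * (e k : ℂ)) * (((e l : ℂ))⁻¹ * ((e l : ℂ))⁻¹) :=
      mul_right_cancel₀ hM0 (by linear_combination hkl)
    have h3r : (e i * e i) * ((e j)⁻¹ * (e j)⁻¹) = (e k * e k) * ((e l)⁻¹ * (e l)⁻¹) := by
      exact_mod_cast h3
    have h4 : e i * e l = e k * e j := by
      have hj := (hpos j).ne'
      have hl := (hpos l).ne'
      have h5 : (e i * e l) * (e i * e l) = (e k * e j) * (e k * e j) := by
        field_simp at h3r
        linear_combination h3r
      exact (mul_self_inj (mul_pos (hpos i) (hpos l)).le (mul_pos (hpos k) (hpos j)).le).mp h5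
    have h6 : (e i : ℂ) * (e l : ℂ) = (e k : ℂ) * (e j : ℂ) := by exact_mod_cast h4
    have hj := hne j
    have hl := hne l
    field_simp
    linear_combination h6

/-- **GNS detailed balance implies KMS detailed balance.**
Let `γ` be a positive definite Gibbs state with positive definite square root `γsq`
(`γsq * γsq = γ`).  If the Hermitian-preserving superoperator `Φ`, with fixed point `γ` and
Hilbert–Schmidt adjoint `Φadj`, satisfies GNS detailed balance `Φ = R_γ ∘ Φ† ∘ R_γ⁻¹`
(`R_γ X = X * γ`), then it also satisfies KMS detailed balance
`Φ = J_γ ∘ Φ† ∘ J_γ⁻¹` where `J_γ X = √γ * X * √γ`. -/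
theorem gns_detailed_balance_implies_kms {d : ℕ}
    (γ γsq : Matrix (Fin d) (Fin d) ℂ) (hγ : γ.PosDef) (hγsq : γsq.PosDef)
    (hsq : γsq * γsq = γ)
    (Φ Φadj : Matrix (Fin d) (Fin d) ℂ →ₗ[ℂ] Matrix (Fin d) (Fin d) ℂ)
    (hadj : ∀ A B : Matrix (Fin d) (Fin d) ℂ,
      (Aᴴ * Φ B).trace = ((Φadj A)ᴴ * B).trace)
    (hherm : ∀ X : Matrix (Fin d) (Fin d) ℂ, Φ Xᴴ = (Φ X)ᴴ)
    (hfix : Φ γ = γ)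
    (hGNS : ∀ X : Matrix (Fin d) (Fin d) ℂ, Φ X = Φadj (X * γ⁻¹) * γ) :
    ∀ X : Matrix (Fin d) (Fin d) ℂ, Φ X = γsq * Φadj (γsq⁻¹ * X * γsq⁻¹) * γsq := by
  have hγu : IsUnit γ.det := hγ.isUnit.map detMonoidHom
  have hγsqu : IsUnit γsq.det := hγsq.isUnit.map detMonoidHom
  have hγinv : γ * γ⁻¹ = 1 := mul_nonsing_inv _ hγu
  have hγinv' : γ⁻¹ * γ = 1 := nonsing_inv_mul _ hγu
  have hsqinv : γsq * γsq⁻¹ = 1 := mul_nonsing_inv _ hγsqu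
  have hsqinv' : γsq⁻¹ * γsq = 1 := nonsing_inv_mul _ hγsqu
  -- Φadj is Hermitian-preserving
  have hadjherm : ∀ A : Matrix (Fin d) (Fin d) ℂ, Φadj Aᴴ = (Φadj A)ᴴ := by
    intro A
    have key : ∀ B, ((Φadj Aᴴ - (Φadj A)ᴴ)ᴴ * B).trace = 0 := by
      intro B
      have h1 : ((Φadj Aᴴ)ᴴ * B).trace = (A * Φ B).trace := by
        have := hadj Aᴴ B; rw [conjTranspose_conjTranspose] at this; exact this.symm
      have h2 : ((Φadj A) * B).trace = (A * Φ B).trace := by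
        calc ((Φadj A) * B).trace
            = star (((Φadj A) * B)ᴴ).trace := by rw [trace_conjTranspose, star_star]
          _ = star ((Φadj A)ᴴ * Bᴴ).trace := by rw [conjTranspose_mul, trace_mul_comm]
          _ = star (Aᴴ * Φ Bᴴ).trace := by rw [hadj]
          _ = star (Aᴴ * (Φ B)ᴴ).trace := by rw [hherm]
          _ = ((Aᴴ * (Φ B)ᴴ)ᴴ).trace := by rw [trace_conjTranspose]
          _ = (A * Φ B).trace := by
              rw [conjTranspose_mul, conjTranspose_conjTranspose,
                conjTranspose_conjTranspose, trace_mul_comm]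
      rw [conjTranspose_sub, conjTranspose_conjTranspose, Matrix.sub_mul, trace_sub,
        h1, h2, sub_self]
    exact sub_eq_zero.mp (hs_nondeg _ key)
  -- left GNS form
  have hGNSl : ∀ X : Matrix (Fin d) (Fin d) ℂ, Φ X = γ * Φadj (γ⁻¹ * X) := by
    intro X
    have h := congrArg conjTranspose (hGNS Xᴴ)
    rw [← hherm, conjTranspose_conjTranspose, conjTranspose_mul, ← hadjherm,
      conjTranspose_mul, conjTranspose_conjTranspose, hγ.1.eq,
      conjTranspose_nonsing_inv, hγ.1.eq] at h
    exact h
  -- commutation with the modular operator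
  have hcomm : ∀ X : Matrix (Fin d) (Fin d) ℂ,
      Φadj (γ * X * γ⁻¹) = γ * Φadj X * γ⁻¹ := by
    intro X
    have h := (hGNS (γ * X)).symm.trans (hGNSl (γ * X))
    rw [← mul_assoc, hγinv', one_mul] at h
    have := congrArg (· * γ⁻¹) h
    simpa [mul_assoc, hγinv] using this
  -- spectral decomposition of γsq
  have hH : γsq.IsHermitian := hγsq.1
  set e : Fin d → ℝ := hH.eigenvalues with he
  have hpos : ∀ i, 0 < e i := hγsq.eigenvalues_pos
  have hne : ∀ i, (e i : ℂ) ≠ 0 := fun i => by exact_mod_cast (hpos i).ne'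
  set U : Matrix (Fin d) (Fin d) ℂ := (hH.eigenvectorUnitary : Matrix (Fin d) (Fin d) ℂ)
    with hUdef
  have hU1 : U * star U = 1 := mem_unitaryGroup_iff.mp hH.eigenvectorUnitary.2
  have hU2 : star U * U = 1 := mem_unitaryGroup_iff'.mp hH.eigenvectorUnitary.2
  set D : Matrix (Fin d) (Fin d) ℂ := diagonal (fun i => (e i : ℂ)) with hD
  set D' : Matrix (Fin d) (Fin d) ℂ := diagonal (fun i => ((e i : ℂ))⁻¹) with hD'
  have hspec : γsq = U * D * star U := hH.spectral_theorem
  have hc1 : ∀ Z, star U * (U * Z) = Z := fun Z => by rw [← Matrix.mul_assoc, hU2, Matrix.one_mul]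
  have hc2 : ∀ Z, U * (star U * Z) = Z := fun Z => by rw [← Matrix.mul_assoc, hU1, Matrix.one_mul]
  have hDD' : D * D' = 1 := by
    rw [hD, hD', diagonal_mul_diagonal]
    simp only [mul_inv_cancel₀ (hne _)]
    exact diagonal_one
  have hD'D : D' * D = 1 := by
    rw [hD, hD', diagonal_mul_diagonal]
    simp only [inv_mul_cancel₀ (hne _)]
    exact diagonal_one
  have hdc1 : ∀ Z, D * (D' * Z) = Z := fun Z => by rw [← Matrix.mul_assoc, hDD', Matrix.one_mul]
  have hdc2 : ∀ Z, D' * (D * Z) = Z := fun Z => by rw [← Matrix.mul_assoc, hD'D, Matrix.one_mul]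
  have hγspec : γ = U * (D * D) * star U := by
    rw [← hsq, hspec]; simp only [Matrix.mul_assoc, hc1]
  have hsqinvspec : γsq⁻¹ = U * D' * star U := by
    apply inv_eq_right_inv
    rw [hspec]; simp only [Matrix.mul_assoc, hc1, hdc1]; exact hU1
  have hγinvspec : γ⁻¹ = U * (D' * D') * star U := by
    apply inv_eq_right_inv
    rw [hγspec]; simp only [Matrix.mul_assoc, hc1, hdc1]; exact hU1
  -- conjugated superoperator
  let Ψ : Matrix (Fin d) (Fin d) ℂ →ₗ[ℂ] Matrix (Fin d) (Fin d) ℂ :=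
    { toFun := fun X => star U * Φadj (U * X * star U) * U
      map_add' := by intro x y; simp [Matrix.mul_add, Matrix.add_mul]
      map_smul' := by intro c x; simp [Matrix.mul_smul, Matrix.smul_mul] }
  have hΨ : ∀ Z, Ψ Z = star U * Φadj (U * Z * star U) * U := fun Z => rfl
  have hΦU : ∀ Z, Φadj (U * Z * star U) = U * Ψ Z * star U := by
    intro Z
    rw [hΨ]
    simp only [Matrix.mul_assoc, hc2, hU1, Matrix.mul_one]
  have hΨcomm : ∀ X, Ψ ((D * D) * X * (D' * D')) = (D * D) * Ψ X * (D' * D') := by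
    intro X
    have h1 : U * ((D * D) * X * (D' * D')) * star U = γ * (U * X * star U) * γ⁻¹ := by
      rw [hγinvspec, hγspec]; simp only [Matrix.mul_assoc, hc1]
    calc Ψ ((D * D) * X * (D' * D'))
        = star U * Φadj (γ * (U * X * star U) * γ⁻¹) * U := by rw [hΨ, h1]
      _ = star U * (γ * Φadj (U * X * star U) * γ⁻¹) * U := by rw [hcomm]
      _ = (D * D) * Ψ X * (D' * D') := by
          rw [hγinvspec, hγspec, hΨ]
          simp only [Matrix.mul_assoc, hc1, hc2, hU2, hU1, Matrix.mul_one]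
  have hkey : ∀ X, Ψ (D * X * D') = D * Ψ X * D' := by
    apply half_step e hpos Ψ
    intro X
    have := hΨcomm X
    simp only [hD, hD', diagonal_mul_diagonal] at this
    exact this
  -- half-step commutation for Φadj
  have hhalf : ∀ X, Φadj (γsq * X * γsq⁻¹) = γsq * Φadj X * γsq⁻¹ := by
    intro X
    have h1 : γsq * X * γsq⁻¹ = U * (D * (star U * X * U) * D') * star U := by
      rw [hsqinvspec, hspec]; simp only [Matrix.mul_assoc]
    rw [h1, hΦU, hkey, hsqinvspec, hspec, hΨ]
    simp only [Matrix.mul_assoc, hc1, hc2, hU2, hU1, Matrix.mul_one]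
  -- conclusion
  intro X
  have h2 : γsq⁻¹ * γsq⁻¹ = γ⁻¹ := by rw [← hsq, Matrix.mul_inv_rev]
  have hs1 : ∀ Z, γsq * (γsq⁻¹ * Z) = Z := fun Z => by
    rw [← Matrix.mul_assoc, hsqinv, Matrix.one_mul]
  have hs2 : ∀ Z, γsq⁻¹ * (γsq * Z) = Z := fun Z => by
    rw [← Matrix.mul_assoc, hsqinv', Matrix.one_mul]
  calc Φ X = Φadj (X * γ⁻¹) * γ := hGNS X
    _ = Φadj (γsq * (γsq⁻¹ * X * γsq⁻¹) * γsq⁻¹) * γ := by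
        congr 2
        rw [← h2]
        simp only [Matrix.mul_assoc, hs1]
    _ = (γsq * Φadj (γsq⁻¹ * X * γsq⁻¹) * γsq⁻¹) * γ := by rw [hhalf]
    _ = γsq * Φadj (γsq⁻¹ * X * γsq⁻¹) * γsq := by
        rw [← hsq]
        simp only [Matrix.mul_assoc, hs2]
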